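/- Let d, h be positive integers, let W_in be a real h×d matrix, W_out a real d×h matrix, and let μ be a probability measure on ℝ^d. Suppose D : ℝ^d → Matrix (Fin h) (Fin h) ℝ assigns to each x a diagonal matrix whose diagonal entries lie in {0,1}, and set J_r(x) = W_out * D(x) * W_in and J_f(x) = 1 + J_r(x) (identity plus J_r). Assume every matrix entry of x ↦ J_f(x)ᵀ * J_f(x) is μ-integrable, that the entrywise expectation ∫ J_f(x)ᵀ * J_f(x) dμ(x) equals the d×d identity matrix (dynamic isometry in expectation), that the entrywise expectation ∫ D(x) dμ(x) equals (1/2) times the h×h identity matrix, and that the set {x : J_r(x) ≠ 0} has positive μ-measure. Then trace(W_out * W_in) = −∫ ‖J_r(x)‖_F² dμ(x), and in particular trace(W_out * W_in) < 0. -/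
import Mathlib

open MeasureTheory Matrix

/-- Squared Frobenius norm of a real matrix: `‖M‖_F² = Σ_{l,m} M_{lm}²`. -/
noncomputable def frobSq {n m : Type*} [Fintype n] [Fintype m]
    (M : Matrix n m ℝ) : ℝ :=
  ∑ i, ∑ j, (M i j) ^ 2

lemma frobSq_nonneg {n m : Type*} [Fintype n] [Fintype m] (M : Matrix n m ℝ) :
    0 ≤ frobSq M :=
  Finset.sum_nonneg fun _ _ => Finset.sum_nonneg fun _ _ => sq_nonneg _

lemma frobSq_eq_zero_iff {n m : Type*} [Fintype n] [Fintype m] (M : Matrix n m ℝ) :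
    frobSq M = 0 ↔ M = 0 := by
  constructor
  · intro hzero
    ext i j
    have h1 := (Finset.sum_eq_zero_iff_of_nonneg
      (fun i _ => Finset.sum_nonneg fun j _ => sq_nonneg (M i j))).mp hzero i (Finset.mem_univ i)
    have h2 := (Finset.sum_eq_zero_iff_of_nonneg
      (fun j _ => sq_nonneg (M i j))).mp h1 j (Finset.mem_univ j)
    simpa using pow_eq_zero_iff (two_ne_zero) |>.mp h2
  · rintro rfl; simp [frobSq]

lemma trace_transpose_mul_self {n : Type*} [Fintype n] (M : Matrix n n ℝ) :
    Matrix.trace (Mᵀ * M) = frobSq M := by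
  simp only [Matrix.trace, Matrix.diag, Matrix.mul_apply, Matrix.transpose_apply, frobSq, sq]
  exact Finset.sum_comm

/-- **Negative diagonal structure from dynamic isometry.**
If the block Jacobian `J_f(x) = I + J_r(x)` with `J_r(x) = W_out D(x) W_in`
satisfies dynamic isometry in expectation `E[J_fᵀ J_f] = I`, where `D(x)` is
diagonal with entries in `{0,1}` and `E[D(x)] = ½ I`, and the residual is
non-trivial (`{x : J_r(x) ≠ 0}` has positive measure), then
`trace(W_out W_in) = −E[‖J_r(x)‖_F²] < 0`. -/
theorem negative_diagonal_structure
    (d h : ℕ) (hd : 0 < d) (hh : 0 < h)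
    (W_in : Matrix (Fin h) (Fin d) ℝ) (W_out : Matrix (Fin d) (Fin h) ℝ)
    (μ : Measure (EuclideanSpace ℝ (Fin d))) [IsProbabilityMeasure μ]
    (D : EuclideanSpace ℝ (Fin d) → Matrix (Fin h) (Fin h) ℝ)
    (hDdiag : ∀ x, (D x).IsDiag)
    (hD01 : ∀ x k, D x k k = 0 ∨ D x k k = 1)
    (Jr : EuclideanSpace ℝ (Fin d) → Matrix (Fin d) (Fin d) ℝ)
    (hJr : ∀ x, Jr x = W_out * D x * W_in)
    (Jf : EuclideanSpace ℝ (Fin d) → Matrix (Fin d) (Fin d) ℝ)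
    (hJf : ∀ x, Jf x = 1 + Jr x)
    (hInt : ∀ i j, Integrable (fun x => ((Jf x)ᵀ * Jf x) i j) μ)
    (hIso : ∀ i j, ∫ x, ((Jf x)ᵀ * Jf x) i j ∂μ
      = (1 : Matrix (Fin d) (Fin d) ℝ) i j)
    (hDhalf : ∀ k l, ∫ x, D x k l ∂μ
      = ((1 / 2 : ℝ) • (1 : Matrix (Fin h) (Fin h) ℝ)) k l)
    (hpos : 0 < μ {x | Jr x ≠ 0}) :
    Matrix.trace (W_out * W_in) = -∫ x, frobSq (Jr x) ∂μ ∧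
    Matrix.trace (W_out * W_in) < 0 := by
  -- D's diagonal entries are integrable
  have hDkkInt : ∀ k, Integrable (fun x => D x k k) μ := by
    intro k
    by_contra hni
    have := hDhalf k k
    rw [integral_undef hni] at this
    simp at this
  -- trace of Jr in terms of D diagonal
  have htrJr : ∀ x, Matrix.trace (Jr x)
      = ∑ k, (∑ i, W_out i k * W_in k i) * D x k k := by
    intro x
    rw [hJr]
    rw [Matrix.trace_mul_comm, ← Matrix.mul_assoc, Matrix.trace_mul_comm,
      ← (hDdiag x).diagonal_diag]
    simp only [Matrix.trace, Matrix.diag, Matrix.mul_apply, Matrix.diagonal_apply,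
      ite_mul, zero_mul, Finset.sum_ite_eq, Finset.mem_univ, if_true,
      Matrix.diagonal_apply_eq]
    refine Finset.sum_congr rfl fun k _ => ?_
    rw [Finset.mul_sum, Finset.sum_mul]
    exact Finset.sum_congr rfl fun i _ => by ring
  have htrJrInt : Integrable (fun x => Matrix.trace (Jr x)) μ := by
    have : Integrable (fun x => ∑ k, (∑ i, W_out i k * W_in k i) * D x k k) μ :=
      integrable_finset_sum _ fun k _ => (hDkkInt k).const_mul _
    exact this.congr (Filter.Eventually.of_forall fun x => (htrJr x).symm)
  have htrJrInt' : ∫ x, Matrix.trace (Jr x) ∂μ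
      = (1 / 2) * Matrix.trace (W_out * W_in) := by
    have : ∫ x, Matrix.trace (Jr x) ∂μ
        = ∑ k, (∑ i, W_out i k * W_in k i) * (∫ x, D x k k ∂μ) := by
      rw [integral_congr_ae (Filter.Eventually.of_forall htrJr),
        integral_finset_sum _ fun k _ => (hDkkInt k).const_mul _]
      simp [integral_const_mul]
    rw [this]
    have hh2 : ∀ k : Fin h, (∫ x, D x k k ∂μ) = 1 / 2 := by
      intro k; rw [hDhalf k k]; simp
    simp only [hh2]
    have htr : Matrix.trace (W_out * W_in) = ∑ k, ∑ i, W_out i k * W_in k i := by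
      simp only [Matrix.trace, Matrix.diag, Matrix.mul_apply]
      exact Finset.sum_comm
    rw [htr, Finset.mul_sum]
    exact Finset.sum_congr rfl fun k _ => by ring
  -- trace identity
  have hTr : ∀ x, Matrix.trace ((Jf x)ᵀ * Jf x)
      = (d : ℝ) + 2 * Matrix.trace (Jr x) + frobSq (Jr x) := by
    intro x
    rw [hJf]
    have : (1 + Jr x)ᵀ * (1 + Jr x)
        = 1 + (Jr x + (Jr x)ᵀ + (Jr x)ᵀ * Jr x) := by
      rw [Matrix.transpose_add, Matrix.transpose_one]
      noncomm_ring
    rw [this, Matrix.trace_add, Matrix.trace_one, Matrix.trace_add, Matrix.trace_add,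
      Matrix.trace_transpose, trace_transpose_mul_self]
    simp [Fintype.card_fin]
    ring
  -- integrability and value of ∫ trace(JfᵀJf)
  have hTfInt : Integrable (fun x => Matrix.trace ((Jf x)ᵀ * Jf x)) μ := by
    have : Integrable (fun x => ∑ i, ((Jf x)ᵀ * Jf x) i i) μ :=
      integrable_finset_sum _ fun i _ => hInt i i
    exact this.congr (Filter.Eventually.of_forall fun x => rfl)
  have hTfVal : ∫ x, Matrix.trace ((Jf x)ᵀ * Jf x) ∂μ = (d : ℝ) := by
    have : ∫ x, Matrix.trace ((Jf x)ᵀ * Jf x) ∂μ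
        = ∑ i, ∫ x, ((Jf x)ᵀ * Jf x) i i ∂μ := by
      rw [← integral_finset_sum _ fun i _ => hInt i i]
      rfl
    rw [this]
    simp [hIso]
  -- frobSq integrability
  have hFrobEq : ∀ x, frobSq (Jr x)
      = Matrix.trace ((Jf x)ᵀ * Jf x) - (d : ℝ) - 2 * Matrix.trace (Jr x) := by
    intro x; rw [hTr x]; ring
  have hFrobInt : Integrable (fun x => frobSq (Jr x)) μ := by
    have : Integrable (fun x =>
        Matrix.trace ((Jf x)ᵀ * Jf x) - (d : ℝ) - 2 * Matrix.trace (Jr x)) μ :=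
      ((hTfInt.sub (integrable_const _)).sub (htrJrInt.const_mul 2))
    exact this.congr (Filter.Eventually.of_forall fun x => (hFrobEq x).symm)
  have hFrobVal : ∫ x, frobSq (Jr x) ∂μ = - Matrix.trace (W_out * W_in) := by
    rw [integral_congr_ae (Filter.Eventually.of_forall hFrobEq)]
    have h1 : ∫ x, (Matrix.trace ((Jf x)ᵀ * Jf x) - (d : ℝ) - 2 * Matrix.trace (Jr x)) ∂μ
        = (∫ x, Matrix.trace ((Jf x)ᵀ * Jf x) ∂μ) - (d : ℝ)
          - 2 * ∫ x, Matrix.trace (Jr x) ∂μ := by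
      have e1 : ∫ x, ((Matrix.trace ((Jf x)ᵀ * Jf x) - (d : ℝ))
            - 2 * Matrix.trace (Jr x)) ∂μ
          = (∫ x, (Matrix.trace ((Jf x)ᵀ * Jf x) - (d : ℝ)) ∂μ)
            - ∫ x, 2 * Matrix.trace (Jr x) ∂μ :=
        integral_sub (hTfInt.sub (integrable_const _)) (htrJrInt.const_mul 2)
      have e2 : ∫ x, (Matrix.trace ((Jf x)ᵀ * Jf x) - (d : ℝ)) ∂μ
          = (∫ x, Matrix.trace ((Jf x)ᵀ * Jf x) ∂μ) - ∫ x, (d : ℝ) ∂μ :=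
        integral_sub hTfInt (integrable_const _)
      rw [e1, e2, integral_const_mul, integral_const]
      simp
    rw [h1, hTfVal, htrJrInt']
    ring
  have hEq : Matrix.trace (W_out * W_in) = -∫ x, frobSq (Jr x) ∂μ := by
    rw [hFrobVal]; ring
  refine ⟨hEq, ?_⟩
  have hposInt : 0 < ∫ x, frobSq (Jr x) ∂μ := by
    rw [integral_pos_iff_support_of_nonneg
      (fun x => frobSq_nonneg (Jr x)) hFrobInt]
    have : Function.support (fun x => frobSq (Jr x)) = {x | Jr x ≠ 0} := by
      ext x
      simp [Function.support, frobSq_eq_zero_iff]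
    rwa [this]
  rw [hEq]; linarith
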